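/- Let k be an integer with k > q/2 and let α ∈ (q/(2k), 1). Then ε^{−q/2} P(L_{αT} ≥ k) → 0 as ε → 0. -/

import Mathlib

open MeasureTheory ProbabilityTheory Filter Set
open scoped Classical

noncomputable section

/-- The space `S↓` of nonincreasing nonnegative sequences with total sum at most 1
(encoded by the condition that all partial sums are at most 1). -/
abbrev Sdown : Type := {s : ℕ → ℝ //
  (∀ i, s (i + 1) ≤ s i) ∧ (∀ i, 0 ≤ s i) ∧ ∀ n, ∑ i ∈ Finset.range n, s i ≤ 1}

/-- Index type for the whole family of random objects: one ratio sequence `ξ̃_u` per node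
`u` of the genealogical tree (nodes are encoded as lists, latest generation first, the
`i`-th child of `u` being `i :: u`), together with one uniform tag position per tag. -/
def FragIdx (q : ℕ) : Type := (List ℕ) ⊕ (Fin q)

/-- Codomains of the family of random objects. -/
def FragTgt (q : ℕ) : FragIdx q → Type
  | Sum.inl _ => Sdown
  | Sum.inr _ => ℝ

instance fragTgtMS (q : ℕ) : ∀ i : FragIdx q, MeasurableSpace (FragTgt q i)
  | Sum.inl _ => inferInstanceAs (MeasurableSpace Sdown)
  | Sum.inr _ => inferInstanceAs (MeasurableSpace ℝ)

/-- The combined family `(ξ̃_u)_u, (Y_k)_k` as a single indexed family. -/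
def fragFam {Ω : Type*} (q : ℕ) (xit : List ℕ → Ω → Sdown) (Y : Fin q → Ω → ℝ) :
    ∀ i : FragIdx q, Ω → FragTgt q i
  | Sum.inl u => xit u
  | Sum.inr k => Y k

/-- A conservative fragmentation chain with `q` tagged fragments: the ratio sequences
`ξ̃_u` are i.i.d. with law `ν`, the tag positions `Y_k` are i.i.d. uniform on `[0,1]`,
and the whole family is independent. -/
structure FragModel (Ω : Type*) [MeasurableSpace Ω] (P : Measure Ω) (q : ℕ)
    (ν : Measure Sdown) where
  xit : List ℕ → Ω → Sdown
  Y : Fin q → Ω → ℝ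
  meas_xit : ∀ u, Measurable (xit u)
  meas_Y : ∀ k, Measurable (Y k)
  law_xit : ∀ u, Measure.map (xit u) P = ν
  law_Y : ∀ k, Measure.map (Y k) P = volume.restrict (Set.Icc (0 : ℝ) 1)
  indep : iIndepFun (fragFam q xit Y) P

namespace FragModel

variable {Ω : Type*} [MeasurableSpace Ω] {P : Measure Ω} {q : ℕ} {ν : Measure Sdown}

/-- Fragment sizes: `ξ_∅ = 1`, `ξ_{ui} = ξ̃_{ui} ξ_u`. -/
def xi (M : FragModel Ω P q ν) : List ℕ → Ω → ℝ
  | [] => fun _ => 1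
  | i :: u => fun ω => (M.xit u ω).1 i * M.xi u ω

/-- Left endpoints: `l_∅ = 0`, `l_{ui} = l_u + ξ_u (ξ̃_{u1} + ⋯ + ξ̃_{u(i-1)})`. -/
def lpos (M : FragModel Ω P q ν) : List ℕ → Ω → ℝ
  | [] => fun _ => 0
  | i :: u => fun ω => M.lpos u ω + M.xi u ω * ∑ j ∈ Finset.range i, (M.xit u ω).1 j

/-- Tag sets: `A_u = {k : Y_k ∈ [l_u, l_u + ξ_u)}`. -/
def tagSet (M : FragModel Ω P q ν) (u : List ℕ) (ω : Ω) : Finset (Fin q) :=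
  Finset.univ.filter fun k => M.Y k ω ∈ Set.Ico (M.lpos u ω) (M.lpos u ω + M.xi u ω)

/-- `S_n^{(i)} = -log ξ_u` for the (a.s. unique) node `u` of generation `n` carrying
tag `i`. -/
def Sgen (M : FragModel Ω P q ν) (n : ℕ) (i : Fin q) (ω : Ω) : ℝ :=
  sInf {x | ∃ u : List ℕ, u.length = n ∧ i ∈ M.tagSet u ω ∧ x = -Real.log (M.xi u ω)}

/-- Residual lifetime of the fragment carrying tag `i`:
`B_t^{(i)} = inf {S_n^{(i)} : S_n^{(i)} > t} - t`. -/
def Bres (M : FragModel Ω P q ν) (t : ℝ) (i : Fin q) (ω : Ω) : ℝ :=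
  sInf {x | ∃ n : ℕ, x = M.Sgen n i ω ∧ t < x} - t

/-- The tree `𝒯₁`: nodes with at least one tag whose parent is still of size `≥ ε`,
together with the root. -/
def Tone (M : FragModel Ω P q ν) (ε : ℝ) (ω : Ω) : Set (List ℕ) :=
  {u | u ≠ [] ∧ M.tagSet u ω ≠ ∅ ∧ ε ≤ M.xi u.tail ω} ∪ {[]}

/-- Leaves of a subtree of the genealogical tree. -/
def leavesOf (T : Set (List ℕ)) : Set (List ℕ) := {u ∈ T | ∀ i : ℕ, (i :: u) ∉ T}

/-- The nodes of `𝒯₁` alive at time `t`: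
`S(t) = {u ∈ 𝒯₁ : -log ξ_{a(u)} ≤ t < -log ξ_u}`. -/
def Sliv (M : FragModel Ω P q ν) (ε t : ℝ) (ω : Ω) : Set (List ℕ) :=
  {u | u ∈ M.Tone ε ω ∧ -Real.log (M.xi u.tail ω) ≤ t ∧ t < -Real.log (M.xi u ω)}

/-- `L_t = ∑_{u ∈ S(t)} (#A_u - 1)`. -/
def Lsum (M : FragModel Ω P q ν) (ε t : ℝ) (ω : Ω) : ℝ :=
  ∑' u : List ℕ, if u ∈ M.Sliv ε t ω then ((M.tagSet u ω).card : ℝ) - 1 else 0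

/-- `∑_{u ∈ S(t)} 1_{#A_u = 1}`. -/
def Nsing (M : FragModel Ω P q ν) (ε t : ℝ) (ω : Ω) : ℝ :=
  ∑' u : List ℕ, if u ∈ M.Sliv ε t ω ∧ (M.tagSet u ω).card = 1 then (1 : ℝ) else 0

/-- The event `C_{k,l}(t)`. -/
def Ckl (M : FragModel Ω P q ν) (ε t : ℝ) (k l : ℕ) : Set Ω :=
  {ω | M.Nsing ε t ω = k ∧ M.Lsum ε t ω = l}

/-- The tree `𝒯₂`: nodes of `𝒯₁` whose parent carries at least two tags, together
with the root. -/
def Ttwo (M : FragModel Ω P q ν) (ε : ℝ) (ω : Ω) : Set (List ℕ) :=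
  {u | u ∈ M.Tone ε ω ∧ u ≠ [] ∧ 2 ≤ (M.tagSet u.tail ω).card} ∪ {[]}

/-- `ℒ₂`: leaves of `𝒯₂` carrying exactly one tag. -/
def Ltwo (M : FragModel Ω P q ν) (ε : ℝ) (ω : Ω) : Set (List ℕ) :=
  {u | u ∈ M.Ttwo ε ω ∧ (∀ i : ℕ, (i :: u) ∉ M.Ttwo ε ω) ∧ (M.tagSet u ω).card = 1}

/-- The σ-algebra `σ(ℒ₂)` generated by the random set `ℒ₂`. -/
def sigmaLtwo (M : FragModel Ω P q ν) (ε : ℝ) : MeasurableSpace Ω :=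
  MeasurableSpace.comap (fun ω => M.Ltwo ε ω)
    (@MeasurableSpace.pi (List ℕ) (fun _ => Prop) (fun _ => ⊤))

/-- The frozen fragments: `𝒰_ε = {u : ξ_{a(u)} ≥ ε > ξ_u}`. -/
def Ueps (M : FragModel Ω P q ν) (ε : ℝ) (ω : Ω) : Set (List ℕ) :=
  {u | ε ≤ M.xi u.tail ω ∧ M.xi u ω < ε}

/-- The empirical measure applied to `f` : `γ_T(f) = ∑_{u ∈ 𝒰_ε} ξ_u f(ξ_u/ε)`
(`T = -log ε`). -/
def gammaT (M : FragModel Ω P q ν) (ε : ℝ) (f : ℝ → ℝ) (ω : Ω) : ℝ :=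
  ∑' u : List ℕ, if u ∈ M.Ueps ε ω then M.xi u ω * f (M.xi u ω / ε) else 0

end FragModel

/-- The functional `η(f) = (1/μ) ∫₀^∞ E(f(Y-s) 1_{Y-s ≥ 0}) ds`, `Y ~ π`. -/
def etaF (π : Measure ℝ) (μ : ℝ) (f : ℝ → ℝ) : ℝ :=
  (1 / μ) * ∫ s in Set.Ici (0 : ℝ), (∫ y, Set.indicator (Set.Ici (0 : ℝ)) f (y - s) ∂π)

/-- Topological support of a measure. -/
def msupport {α : Type*} [TopologicalSpace α] [MeasurableSpace α] (m : Measure α) :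
    Set α := {x | ∀ U : Set α, IsOpen U → x ∈ U → m U ≠ 0}

/-- Membership in `ℬ⁰_sym(1)`: bounded, measurable, centered for `η`. -/
def memB0 (π : Measure ℝ) (μ : ℝ) (f : ℝ → ℝ) : Prop :=
  Measurable f ∧ (∃ C : ℝ, ∀ x, |f x| ≤ C) ∧ etaF π μ f = 0

/-- The symmetrized tensor product `(f₁ ⊗ ⋯ ⊗ f_q)_sym`. -/
def tensSym (q : ℕ) (f : Fin q → ℝ → ℝ) (x : Fin q → ℝ) : ℝ :=
  (1 / (Nat.factorial q : ℝ)) * ∑ σ : Equiv.Perm (Fin q), ∏ i, f (σ i) (x i)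

/-- `K₁(q) = ∑_{i=1}^q q!/(q-i)!`. -/
def K1 (q : ℕ) : ℝ := ∑ i ∈ Finset.Icc 1 q, (Nat.factorial q : ℝ) / (Nat.factorial (q - i))

section AuxStmt9

lemma list_prefix_split : ∀ (x y : List ℕ), ¬ x <+: y → ¬ y <+: x →
    ∃ (c x' y' : List ℕ) (i j : ℕ), i ≠ j ∧ x = c ++ i :: x' ∧ y = c ++ j :: y' := by
  intro x
  induction x with
  | nil => intro y h _; exact absurd List.nil_prefix h
  | cons i x ih =>
    intro y hxy hyx
    match y with
    | [] => exact absurd List.nil_prefix hyx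
    | j :: y' =>
      by_cases hij : i = j
      · subst hij
        have h1 : ¬ x <+: y' := fun h => hxy (List.cons_prefix_cons.2 ⟨rfl, h⟩)
        have h2 : ¬ y' <+: x := fun h => hyx (List.cons_prefix_cons.2 ⟨rfl, h⟩)
        obtain ⟨c, x', y'', a, b, hab, hx, hy⟩ := ih y' h1 h2
        exact ⟨i :: c, x', y'', a, b, hab, by simp [hx], by simp [hy]⟩
      · exact ⟨[], x, y', i, j, hij, by simp, by simp⟩

lemma list_suffix_split (u v : List ℕ) (hu : ¬ u <:+ v) (hv : ¬ v <:+ u) :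
    ∃ (w a b : List ℕ) (i j : ℕ), i ≠ j ∧ u = a ++ i :: w ∧ v = b ++ j :: w := by
  obtain ⟨c, x', y', i, j, hij, hx, hy⟩ :=
    list_prefix_split u.reverse v.reverse
      (fun h => hu (List.reverse_prefix.1 h)) (fun h => hv (List.reverse_prefix.1 h))
  refine ⟨c.reverse, x'.reverse, y'.reverse, i, j, hij, ?_, ?_⟩
  · have := congrArg List.reverse hx
    simpa [List.reverse_append] using this
  · have := congrArg List.reverse hy
    simpa [List.reverse_append] using this

namespace FragModel

variable {Ω : Type*} [MeasurableSpace Ω] {P : Measure Ω} {q : ℕ} {ν : Measure Sdown}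

lemma sdown_nonneg (s : Sdown) (i : ℕ) : 0 ≤ s.1 i := s.2.2.1 i

lemma sdown_sum_nonneg (s : Sdown) (n : ℕ) : 0 ≤ ∑ j ∈ Finset.range n, s.1 j :=
  Finset.sum_nonneg fun j _ => sdown_nonneg s j

lemma sdown_sum_le_one (s : Sdown) (n : ℕ) : ∑ j ∈ Finset.range n, s.1 j ≤ 1 := s.2.2.2 n

lemma sdown_sum_mono (s : Sdown) {m n : ℕ} (h : m ≤ n) :
    ∑ j ∈ Finset.range m, s.1 j ≤ ∑ j ∈ Finset.range n, s.1 j :=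
  Finset.sum_le_sum_of_subset_of_nonneg (Finset.range_subset_range.2 h)
    (fun j _ _ => sdown_nonneg s j)

lemma sdown_le_one (s : Sdown) (i : ℕ) : s.1 i ≤ 1 := by
  have h0 : s.1 0 ≤ 1 := by simpa [Finset.sum_range_one] using s.2.2.2 1
  have h : ∀ i, s.1 i ≤ s.1 0 := by
    intro i
    induction i with
    | zero => exact le_refl _
    | succ n ih => exact le_trans (s.2.1 n) ih
  exact le_trans (h i) h0

lemma xi_nonneg (M : FragModel Ω P q ν) (u : List ℕ) (ω : Ω) : 0 ≤ M.xi u ω := by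
  induction u with
  | nil => norm_num [xi]
  | cons i u ih => exact mul_nonneg (sdown_nonneg _ _) ih

lemma xi_cons_le (M : FragModel Ω P q ν) (i : ℕ) (u : List ℕ) (ω : Ω) :
    M.xi (i :: u) ω ≤ M.xi u ω :=
  mul_le_of_le_one_left (M.xi_nonneg u ω) (sdown_le_one _ i)

lemma xi_append_le (M : FragModel Ω P q ν) (w u : List ℕ) (ω : Ω) :
    M.xi (w ++ u) ω ≤ M.xi u ω := by
  induction w with
  | nil => simp
  | cons a w ih => exact le_trans (M.xi_cons_le a (w ++ u) ω) ih

/-- The interval of a node. -/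
def Iv (M : FragModel Ω P q ν) (u : List ℕ) (ω : Ω) : Set ℝ :=
  Set.Ico (M.lpos u ω) (M.lpos u ω + M.xi u ω)

lemma Iv_cons_subset (M : FragModel Ω P q ν) (i : ℕ) (u : List ℕ) (ω : Ω) :
    M.Iv (i :: u) ω ⊆ M.Iv u ω := by
  have hξ : 0 ≤ M.xi u ω := M.xi_nonneg u ω
  have hP : 0 ≤ ∑ j ∈ Finset.range i, (M.xit u ω).1 j := sdown_sum_nonneg _ _
  have h1 : M.xi u ω * (∑ j ∈ Finset.range (i + 1), (M.xit u ω).1 j) ≤ M.xi u ω * 1 :=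
    mul_le_mul_of_nonneg_left (sdown_sum_le_one _ _) hξ
  rw [Finset.sum_range_succ, mul_add, mul_one] at h1
  apply Set.Ico_subset_Ico
  · simp only [lpos]
    nlinarith
  · simp only [lpos, xi]
    nlinarith

lemma Iv_append_subset (M : FragModel Ω P q ν) (w u : List ℕ) (ω : Ω) :
    M.Iv (w ++ u) ω ⊆ M.Iv u ω := by
  induction w with
  | nil => simp
  | cons a w ih => exact le_trans (M.Iv_cons_subset a (w ++ u) ω) ih

lemma Iv_sibling_disjoint_lt (M : FragModel Ω P q ν) {i j : ℕ} (hij : i < j)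
    (u : List ℕ) (ω : Ω) : Disjoint (M.Iv (i :: u) ω) (M.Iv (j :: u) ω) := by
  have hξ : 0 ≤ M.xi u ω := M.xi_nonneg u ω
  have hmono : ∑ l ∈ Finset.range (i + 1), (M.xit u ω).1 l
      ≤ ∑ l ∈ Finset.range j, (M.xit u ω).1 l := sdown_sum_mono _ hij
  have h2 : M.xi u ω * (∑ l ∈ Finset.range (i + 1), (M.xit u ω).1 l)
      ≤ M.xi u ω * (∑ l ∈ Finset.range j, (M.xit u ω).1 l) :=
    mul_le_mul_of_nonneg_left hmono hξ
  rw [Finset.sum_range_succ, mul_add] at h2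
  rw [Set.disjoint_left]
  intro x hx1 hx2
  simp only [Iv, Set.mem_Ico, lpos, xi] at hx1 hx2
  nlinarith [hx1.2, hx2.1]

lemma Iv_sibling_disjoint (M : FragModel Ω P q ν) {i j : ℕ} (hij : i ≠ j)
    (u : List ℕ) (ω : Ω) : Disjoint (M.Iv (i :: u) ω) (M.Iv (j :: u) ω) := by
  rcases lt_or_gt_of_ne hij with h | h
  · exact M.Iv_sibling_disjoint_lt h u ω
  · exact (M.Iv_sibling_disjoint_lt h u ω).symm

lemma Iv_disjoint_of_not_suffix (M : FragModel Ω P q ν) {u v : List ℕ}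
    (hu : ¬ u <:+ v) (hv : ¬ v <:+ u) (ω : Ω) : Disjoint (M.Iv u ω) (M.Iv v ω) := by
  obtain ⟨w, a, b, i, j, hij, hu', hv'⟩ := list_suffix_split u v hu hv
  refine Set.disjoint_of_subset ?_ ?_ (M.Iv_sibling_disjoint hij w ω)
  · rw [hu']; exact M.Iv_append_subset a (i :: w) ω
  · rw [hv']; exact M.Iv_append_subset b (j :: w) ω

end FragModel

end AuxStmt9

section AuxStmt9b

namespace FragModel

variable {Ω : Type*} [MeasurableSpace Ω] {P : Measure Ω} {q : ℕ} {ν : Measure Sdown}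
variable {M : FragModel Ω P q ν} {ε t : ℝ} {ω : Ω}

lemma sliv_ne_nil (ht : 0 < t) {u : List ℕ} (hu : u ∈ M.Sliv ε t ω) : u ≠ [] := by
  rintro rfl
  have h := hu.2.2
  simp only [List.tail_nil, xi] at h
  rw [Real.log_one] at h
  linarith

lemma sliv_xi_pos (ht : 0 < t) {u : List ℕ} (hu : u ∈ M.Sliv ε t ω) : 0 < M.xi u ω := by
  rcases (M.xi_nonneg u ω).eq_or_lt with h | h
  · exfalso
    have h2 := hu.2.2
    rw [← h, Real.log_zero] at h2
    linarith
  · exact h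

lemma sliv_xi_lt (ht : 0 < t) {u : List ℕ} (hu : u ∈ M.Sliv ε t ω) :
    M.xi u ω < Real.exp (-t) := by
  have hpos := sliv_xi_pos ht hu
  have h := hu.2.2
  have hlog : Real.log (M.xi u ω) < -t := by linarith
  calc M.xi u ω = Real.exp (Real.log (M.xi u ω)) := (Real.exp_log hpos).symm
    _ < Real.exp (-t) := Real.exp_lt_exp.2 hlog

lemma sliv_tail_ge (ht : 0 < t) {u : List ℕ} (hu : u ∈ M.Sliv ε t ω) :
    Real.exp (-t) ≤ M.xi u.tail ω := by
  obtain ⟨a, u', rfl⟩ := List.exists_cons_of_ne_nil (sliv_ne_nil ht hu)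
  have hpos : 0 < M.xi (a :: u') ω := sliv_xi_pos ht hu
  have htail : 0 < M.xi u' ω := lt_of_lt_of_le hpos (M.xi_cons_le a u' ω)
  have h := hu.2.1
  simp only [List.tail_cons] at h ⊢
  have hlog : -t ≤ Real.log (M.xi u' ω) := by linarith
  calc Real.exp (-t) ≤ Real.exp (Real.log (M.xi u' ω)) := Real.exp_le_exp.2 hlog
    _ = M.xi u' ω := Real.exp_log htail

lemma sliv_not_suffix (ht : 0 < t) {u v : List ℕ} (hu : u ∈ M.Sliv ε t ω)
    (hv : v ∈ M.Sliv ε t ω) (huv : u ≠ v) : ¬ u <:+ v := by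
  rintro ⟨w, rfl⟩
  have hw : w ≠ [] := by rintro rfl; simp at huv
  obtain ⟨a, w', rfl⟩ := List.exists_cons_of_ne_nil hw
  have htail : ((a :: w') ++ u).tail = w' ++ u := by simp
  have h1 : Real.exp (-t) ≤ M.xi (w' ++ u) ω := by
    have := sliv_tail_ge ht hv
    rwa [htail] at this
  have h2 : M.xi (w' ++ u) ω ≤ M.xi u ω := M.xi_append_le w' u ω
  have h3 : M.xi u ω < Real.exp (-t) := sliv_xi_lt ht hu
  linarith

lemma sliv_Iv_disjoint (ht : 0 < t) {u v : List ℕ} (hu : u ∈ M.Sliv ε t ω)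
    (hv : v ∈ M.Sliv ε t ω) (huv : u ≠ v) : Disjoint (M.Iv u ω) (M.Iv v ω) :=
  M.Iv_disjoint_of_not_suffix (sliv_not_suffix ht hu hv huv)
    (sliv_not_suffix ht hv hu huv.symm) ω

lemma tag_mem_Iv {u : List ℕ} {i : Fin q} (h : i ∈ M.tagSet u ω) : M.Y i ω ∈ M.Iv u ω :=
  (Finset.mem_filter.1 h).2

lemma sliv_tagSet_disjoint (ht : 0 < t) {u v : List ℕ} (hu : u ∈ M.Sliv ε t ω)
    (hv : v ∈ M.Sliv ε t ω) (huv : u ≠ v) :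
    Disjoint (M.tagSet u ω) (M.tagSet v ω) := by
  rw [Finset.disjoint_left]
  intro i hiu hiv
  exact Set.disjoint_left.1 (sliv_Iv_disjoint ht hu hv huv) (tag_mem_Iv hiu) (tag_mem_Iv hiv)

lemma sliv_tagSet_nonempty (ht : 0 < t) {u : List ℕ} (hu : u ∈ M.Sliv ε t ω) :
    (M.tagSet u ω).Nonempty := by
  rcases hu.1 with h | h
  · exact Finset.nonempty_iff_ne_empty.2 h.2.1
  · exact absurd h (sliv_ne_nil ht hu)

lemma sliv_finite (ht : 0 < t) : (M.Sliv ε t ω).Finite := by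
  have : Finite ↥(M.Sliv ε t ω) := by
    apply Finite.of_injective
      (fun u : ↥(M.Sliv ε t ω) => (M.tagSet u.1 ω).min' (sliv_tagSet_nonempty ht u.2))
    intro u v huv
    by_contra hne
    have hne' : u.1 ≠ v.1 := fun h => hne (Subtype.ext h)
    have hd := sliv_tagSet_disjoint ht u.2 v.2 hne'
    have h1 : (M.tagSet u.1 ω).min' (sliv_tagSet_nonempty ht u.2) ∈ M.tagSet u.1 ω :=
      Finset.min'_mem _ _
    have h2 : (M.tagSet u.1 ω).min' (sliv_tagSet_nonempty ht u.2) ∈ M.tagSet v.1 ω := by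
      simp only at huv
      rw [huv]; exact Finset.min'_mem _ _
    exact Finset.disjoint_left.1 hd h1 h2
  exact Set.finite_coe_iff.1 this

lemma extraction (ht : 0 < t) (hq : 0 < q) {k : ℕ}
    (hL : (k : ℝ) ≤ M.Lsum ε t ω) :
    ∃ (S : Finset (Fin q)) (g : Fin q → Fin q), S.card = k ∧ (∀ s ∈ S, g s ∉ S) ∧
      ∀ s ∈ S, |M.Y s ω - M.Y (g s) ω| < Real.exp (-t) := by
  classical
  set F : Finset (List ℕ) := (sliv_finite (M := M) (ε := ε) ht (ω := ω)).toFinset with hF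
  have hmemF : ∀ {u : List ℕ}, u ∈ F ↔ u ∈ M.Sliv ε t ω := by
    intro u; simp [hF, Set.Finite.mem_toFinset]
  -- Lsum as a finite sum
  have hLsum : M.Lsum ε t ω = ∑ u ∈ F, (((M.tagSet u ω).card : ℝ) - 1) := by
    rw [Lsum, tsum_eq_sum (s := F)]
    · exact Finset.sum_congr rfl fun u hu => if_pos (hmemF.1 hu)
    · intro u hu
      exact if_neg fun h => hu (hmemF.2 h)
  set m : List ℕ → Fin q := fun u =>
    if h : (M.tagSet u ω).Nonempty then (M.tagSet u ω).min' h else ⟨0, hq⟩ with hm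
  have hmmem : ∀ {u : List ℕ}, u ∈ F → m u ∈ M.tagSet u ω := by
    intro u hu
    have hne := sliv_tagSet_nonempty ht (hmemF.1 hu)
    simp only [hm, dif_pos hne]
    exact Finset.min'_mem _ _
  set Sfull : Finset (Fin q) := F.biUnion (fun u => (M.tagSet u ω).erase (m u)) with hSfull
  have hdisj : ∀ u ∈ F, ∀ v ∈ F, u ≠ v →
      Disjoint ((M.tagSet u ω).erase (m u)) ((M.tagSet v ω).erase (m v)) := by
    intro u hu v hv huv
    exact Finset.disjoint_of_subset_left (Finset.erase_subset _ _)
      (Finset.disjoint_of_subset_right (Finset.erase_subset _ _)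
        (sliv_tagSet_disjoint ht (hmemF.1 hu) (hmemF.1 hv) huv))
  have hcard : k ≤ Sfull.card := by
    rw [hSfull, Finset.card_biUnion hdisj]
    have hsum : ∀ u ∈ F, ((M.tagSet u ω).erase (m u)).card = (M.tagSet u ω).card - 1 :=
      fun u hu => Finset.card_erase_of_mem (hmmem hu)
    have hknat : (k : ℝ) ≤ (∑ u ∈ F, ((M.tagSet u ω).card - 1) : ℕ) := by
      rw [Nat.cast_sum]
      calc (k : ℝ) ≤ ∑ u ∈ F, (((M.tagSet u ω).card : ℝ) - 1) := hLsum ▸ hL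
        _ = ∑ u ∈ F, (((M.tagSet u ω).card - 1 : ℕ) : ℝ) := by
          apply Finset.sum_congr rfl
          intro u hu
          have h1 : 1 ≤ (M.tagSet u ω).card :=
            Finset.card_pos.2 (sliv_tagSet_nonempty ht (hmemF.1 hu))
          rw [Nat.cast_sub h1, Nat.cast_one]
    have := Nat.cast_le (α := ℝ).1 hknat
    calc k ≤ ∑ u ∈ F, ((M.tagSet u ω).card - 1) := this
      _ = ∑ u ∈ F, ((M.tagSet u ω).erase (m u)).card :=
        (Finset.sum_congr rfl fun u hu => (hsum u hu).symm)
  obtain ⟨S, hSsub, hScard⟩ := Finset.exists_subset_card_eq hcard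
  set g : Fin q → Fin q := fun s =>
    if h : ∃ u ∈ F, s ∈ M.tagSet u ω then m h.choose else s with hg
  -- key fact about members of S
  have hkey : ∀ s ∈ S, ∃ u ∈ F, s ∈ (M.tagSet u ω).erase (m u) ∧ g s = m u := by
    intro s hs
    obtain ⟨u, huF, hsu⟩ := Finset.mem_biUnion.1 (hSsub hs)
    have hsu' : s ∈ M.tagSet u ω := Finset.mem_of_mem_erase hsu
    have hex : ∃ u ∈ F, s ∈ M.tagSet u ω := ⟨u, huF, hsu'⟩
    have hchoose := hex.choose_spec
    have hueq : hex.choose = u := by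
      by_contra hne
      exact Finset.disjoint_left.1
        (sliv_tagSet_disjoint ht (hmemF.1 hchoose.1) (hmemF.1 huF) hne)
        hchoose.2 hsu'
    refine ⟨u, huF, hsu, ?_⟩
    simp only [hg, dif_pos hex, hueq]
  refine ⟨S, g, hScard, ?_, ?_⟩
  · intro s hs hgs
    obtain ⟨u, huF, hsu, hgsu⟩ := hkey s hs
    rw [hgsu] at hgs
    obtain ⟨v, hvF, hmv⟩ := Finset.mem_biUnion.1 (hSsub hgs)
    by_cases hvu : v = u
    · subst hvu
      exact (Finset.mem_erase.1 hmv).1 rfl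
    · exact Finset.disjoint_left.1
        (sliv_tagSet_disjoint ht (hmemF.1 hvF) (hmemF.1 huF) hvu)
        (Finset.mem_of_mem_erase hmv) (hmmem huF)
  · intro s hs
    obtain ⟨u, huF, hsu, hgsu⟩ := hkey s hs
    rw [hgsu]
    have h1 : M.Y s ω ∈ M.Iv u ω := tag_mem_Iv (Finset.mem_of_mem_erase hsu)
    have h2 : M.Y (m u) ω ∈ M.Iv u ω := tag_mem_Iv (hmmem huF)
    have h3 : M.xi u ω < Real.exp (-t) := sliv_xi_lt ht (hmemF.1 huF)
    simp only [Iv, Set.mem_Ico] at h1 h2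
    rw [abs_sub_lt_iff]
    constructor <;> linarith

end FragModel

end AuxStmt9b

section AuxStmt9c

lemma prob_step {Ω : Type*} [MeasurableSpace Ω] (P : Measure Ω) [IsProbabilityMeasure P]
    {β : Type*} [MeasurableSpace β] (W : Ω → β) (X : Ω → ℝ)
    (hW : Measurable W) (hX : Measurable X)
    (hind : IndepFun W X P) (hlaw : P.map X = volume.restrict (Set.Icc (0:ℝ) 1))
    {B : Set β} (hB : MeasurableSet B) (c : β → ℝ) (hc : Measurable c) (δ : ℝ) :
    P {ω | W ω ∈ B ∧ |X ω - c (W ω)| < δ}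
      ≤ ENNReal.ofReal (2 * δ) * P (W ⁻¹' B) := by
  have hmap : P.map (fun ω => (W ω, X ω)) = (P.map W).prod (P.map X) :=
    (ProbabilityTheory.indepFun_iff_map_prod_eq_prod_map_map hW.aemeasurable
      hX.aemeasurable).mp hind
  set D : Set (β × ℝ) := {p | p.1 ∈ B ∧ |p.2 - c p.1| < δ} with hD_def
  have hD : MeasurableSet D := by
    apply MeasurableSet.inter
    · exact measurable_fst hB
    · exact measurableSet_lt ((measurable_snd.sub (hc.comp measurable_fst)).abs)
        measurable_const
  have hset : {ω | W ω ∈ B ∧ |X ω - c (W ω)| < δ} = (fun ω => (W ω, X ω)) ⁻¹' D := rfl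
  rw [hset, ← Measure.map_apply (hW.prodMk hX) hD, hmap, hlaw, Measure.prod_apply hD]
  have hsec : ∀ w : β, (volume.restrict (Set.Icc (0:ℝ) 1)) (Prod.mk w ⁻¹' D)
      ≤ B.indicator (fun _ => ENNReal.ofReal (2 * δ)) w := by
    intro w
    by_cases hw : w ∈ B
    · have hsub : Prod.mk w ⁻¹' D ⊆ Set.Ioo (c w - δ) (c w + δ) := by
        intro x hx
        have hx2 := hx.2
        rw [abs_sub_lt_iff] at hx2
        constructor <;> [linarith [hx2.2]; linarith [hx2.1]]
      calc (volume.restrict (Set.Icc (0:ℝ) 1)) (Prod.mk w ⁻¹' D)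
          ≤ (volume.restrict (Set.Icc (0:ℝ) 1)) (Set.Ioo (c w - δ) (c w + δ)) :=
            measure_mono hsub
        _ ≤ volume (Set.Ioo (c w - δ) (c w + δ)) := Measure.restrict_apply_le _ _
        _ = ENNReal.ofReal (2 * δ) := by rw [Real.volume_Ioo]; congr 1; ring
        _ = B.indicator (fun _ => ENNReal.ofReal (2 * δ)) w := by
            rw [Set.indicator_of_mem hw]
    · have : Prod.mk w ⁻¹' D = ∅ := by
        ext x; simp [hD_def, hw]
      rw [this, Set.indicator_of_notMem hw]
      simp
  calc ∫⁻ w, (volume.restrict (Set.Icc (0:ℝ) 1)) (Prod.mk w ⁻¹' D) ∂(P.map W)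
      ≤ ∫⁻ w, B.indicator (fun _ => ENNReal.ofReal (2 * δ)) w ∂(P.map W) :=
        MeasureTheory.lintegral_mono hsec
    _ = ENNReal.ofReal (2 * δ) * (P.map W) B := MeasureTheory.lintegral_indicator_const hB _
    _ = ENNReal.ofReal (2 * δ) * P (W ⁻¹' B) := by rw [Measure.map_apply hW hB]

namespace FragModel

variable {Ω : Type*} [MeasurableSpace Ω] {P : Measure Ω} {q : ℕ} {ν : Measure Sdown}

lemma meas_fragFam (M : FragModel Ω P q ν) :
    ∀ i, Measurable (fragFam q M.xit M.Y i) := by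
  rintro (u | j)
  · exact M.meas_xit u
  · exact M.meas_Y j

lemma indep_one_rest (M : FragModel Ω P q ν) [IsProbabilityMeasure P] (s0 : Fin q) :
    ProbabilityTheory.IndepFun
      (fun ω (j : Fin q) => if j = s0 then (0:ℝ) else M.Y j ω) (M.Y s0) P := by
  set e : Fin q ↪ FragIdx q := ⟨fun j => Sum.inr j, fun a b h => Sum.inr.inj h⟩ with he
  set T₁ : Finset (FragIdx q) := (Finset.univ.erase s0).map e with hT₁
  set T₂ : Finset (FragIdx q) := {Sum.inr s0} with hT₂
  have hdisj : Disjoint T₁ T₂ := by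
    rw [Finset.disjoint_right]
    intro x hx
    replace hx : x = Sum.inr s0 := Finset.mem_singleton.1 hx
    subst hx
    rw [hT₁]
    intro hmemx
    obtain ⟨j, hj, hjeq⟩ := Finset.mem_map.1 hmemx
    have : j = s0 := Sum.inr.inj hjeq
    subst this
    exact (Finset.mem_erase.1 hj).1 rfl
  have h0 := M.indep.indepFun_finset T₁ T₂ hdisj M.meas_fragFam
  have hmem : ∀ j : Fin q, j ≠ s0 → (Sum.inr j : FragIdx q) ∈ T₁ := by
    intro j hj
    rw [hT₁]
    exact Finset.mem_map_of_mem e (Finset.mem_erase.2 ⟨hj, Finset.mem_univ j⟩)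
  set φ : ((i : T₁) → FragTgt q i) → (Fin q → ℝ) := fun v j =>
    if h : j = s0 then 0 else v ⟨Sum.inr j, hmem j h⟩ with hφ
  set ψ : ((i : T₂) → FragTgt q i) → ℝ := fun v =>
    v ⟨Sum.inr s0, Finset.mem_singleton_self _⟩ with hψ
  have hφm : Measurable φ := by
    apply measurable_pi_lambda
    intro j
    by_cases h : j = s0
    · rw [show (fun c : ((i : T₁) → FragTgt q i) => φ c j) = fun _ => (0:ℝ) from
        funext fun c => dif_pos h]
      exact measurable_const
    · rw [show (fun c : ((i : T₁) → FragTgt q i) => φ c j)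
          = fun c => c ⟨Sum.inr j, hmem j h⟩ from funext fun c => dif_neg h]
      exact measurable_pi_apply _
  have hψm : Measurable ψ := measurable_pi_apply _
  have h1 := h0.comp hφm hψm
  have heq1 : φ ∘ (fun a (i : T₁) => fragFam q M.xit M.Y i a)
      = fun ω (j : Fin q) => if j = s0 then (0:ℝ) else M.Y j ω := by
    funext ω j
    by_cases h : j = s0
    · simp [hφ, h]
    · simp only [Function.comp_apply, hφ, dif_neg h, if_neg h]
      exact dif_neg h
  have heq2 : ψ ∘ (fun a (i : T₂) => fragFam q M.xit M.Y i a) = M.Y s0 := rfl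
  rwa [heq1, heq2] at h1

lemma chain_bound (M : FragModel Ω P q ν) [IsProbabilityMeasure P] (δ : ℝ)
    (g : Fin q → Fin q) (S : Finset (Fin q)) (hg : ∀ s ∈ S, g s ∉ S) :
    P (⋂ s ∈ S, {ω | |M.Y s ω - M.Y (g s) ω| < δ})
      ≤ ENNReal.ofReal (2 * δ) ^ S.card := by
  induction S using Finset.induction_on with
  | empty => simp
  | @insert s0 S' hs0 ih =>
    set W : Ω → (Fin q → ℝ) := fun ω j => if j = s0 then (0:ℝ) else M.Y j ω with hW_def
    have hWm : Measurable W := by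
      apply measurable_pi_lambda
      intro j
      by_cases h : j = s0
      · simp only [hW_def, if_pos h]; exact measurable_const
      · simp only [hW_def, if_neg h]; exact M.meas_Y j
    set B : Set (Fin q → ℝ) := ⋂ s ∈ S', {v | |v s - v (g s)| < δ} with hB_def
    have hB : MeasurableSet B := by
      apply MeasurableSet.biInter (Set.to_countable _)
      intro s _
      exact measurableSet_lt ((measurable_pi_apply s).sub (measurable_pi_apply (g s))).abs
        measurable_const
    have hgs0 : g s0 ≠ s0 := fun h =>
      hg s0 (Finset.mem_insert_self s0 S') (by rw [h]; exact Finset.mem_insert_self s0 S')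
    have hA : (⋂ s ∈ S', {ω | |M.Y s ω - M.Y (g s) ω| < δ}) = W ⁻¹' B := by
      ext ω
      simp only [Set.mem_iInter, Set.mem_setOf_eq, Set.mem_preimage, hB_def]
      apply forall_congr'
      intro s
      apply forall_congr'
      intro hs
      have h1 : s ≠ s0 := fun h => hs0 (h ▸ hs)
      have h2 : g s ≠ s0 := fun h =>
        hg s (Finset.mem_insert_of_mem hs) (by rw [h]; exact Finset.mem_insert_self s0 S')
      rw [hW_def]
      simp only [if_neg h1, if_neg h2]
    have hins : (⋂ s ∈ insert s0 S', {ω | |M.Y s ω - M.Y (g s) ω| < δ})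
        = {ω | W ω ∈ B ∧ |M.Y s0 ω - (W ω) (g s0)| < δ} := by
      rw [Finset.set_biInter_insert, hA]
      ext ω
      simp only [Set.mem_inter_iff, Set.mem_preimage, Set.mem_setOf_eq]
      rw [hW_def]
      simp only [if_neg hgs0]
      tauto
    rw [hins, Finset.card_insert_of_notMem hs0]
    have hstep := prob_step P W (M.Y s0) hWm (M.meas_Y s0) (M.indep_one_rest s0)
      (M.law_Y s0) hB (fun v => v (g s0)) (measurable_pi_apply _) δ
    calc P {ω | W ω ∈ B ∧ |M.Y s0 ω - (W ω) (g s0)| < δ}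
        ≤ ENNReal.ofReal (2 * δ) * P (W ⁻¹' B) := hstep
      _ ≤ ENNReal.ofReal (2 * δ) * ENNReal.ofReal (2 * δ) ^ S'.card := by
          apply mul_le_mul_right
          rw [← hA]
          exact ih (fun s hs => fun hmem =>
            hg s (Finset.mem_insert_of_mem hs) (Finset.mem_insert_of_mem hmem))
      _ = ENNReal.ofReal (2 * δ) ^ (S'.card + 1) := by rw [pow_succ, mul_comm]

end FragModel

end AuxStmt9c

section AuxStmt9d

namespace FragModel

variable {Ω : Type*} [MeasurableSpace Ω] {P : Measure Ω} {q : ℕ} {ν : Measure Sdown}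

lemma main_bound (M : FragModel Ω P q ν) [IsProbabilityMeasure P] (hq : 0 < q)
    (k : ℕ) (ε t : ℝ) (ht : 0 < t) :
    P {ω | (k : ℝ) ≤ M.Lsum ε t ω}
      ≤ (Fintype.card (Finset (Fin q) × (Fin q → Fin q)))
        * ENNReal.ofReal (2 * Real.exp (-t)) ^ k := by
  set Ev : Finset (Fin q) × (Fin q → Fin q) → Set Ω := fun p =>
    if p.1.card = k ∧ ∀ s ∈ p.1, p.2 s ∉ p.1 then
      ⋂ s ∈ p.1, {ω | |M.Y s ω - M.Y (p.2 s) ω| < Real.exp (-t)}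
    else ∅ with hEv
  have hsub : {ω | (k : ℝ) ≤ M.Lsum ε t ω} ⊆ ⋃ p, Ev p := by
    intro ω hω
    obtain ⟨S, g, hScard, hgS, habs⟩ := extraction (M := M) (ε := ε) ht hq hω
    refine Set.mem_iUnion.2 ⟨(S, g), ?_⟩
    rw [hEv]
    simp only [if_pos (And.intro hScard hgS)]
    exact Set.mem_iInter₂.2 habs
  calc P {ω | (k : ℝ) ≤ M.Lsum ε t ω} ≤ P (⋃ p, Ev p) := measure_mono hsub
    _ ≤ ∑' p, P (Ev p) := measure_iUnion_le _
    _ = ∑ p, P (Ev p) := tsum_fintype _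
    _ ≤ ∑ _p : Finset (Fin q) × (Fin q → Fin q),
          ENNReal.ofReal (2 * Real.exp (-t)) ^ k := by
        apply Finset.sum_le_sum
        intro p _
        rw [hEv]
        by_cases hp : p.1.card = k ∧ ∀ s ∈ p.1, p.2 s ∉ p.1
        · simp only [if_pos hp]
          have := M.chain_bound (Real.exp (-t)) p.2 p.1 hp.2
          rwa [hp.1] at this
        · simp [if_neg hp]
    _ = (Fintype.card (Finset (Fin q) × (Fin q → Fin q)))
        * ENNReal.ofReal (2 * Real.exp (-t)) ^ k := by
        rw [Finset.sum_const, Finset.card_univ, nsmul_eq_mul]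

end FragModel

end AuxStmt9d


/-- `ε^{-q/2} P(L_{αT} ≥ k) → 0` as `ε → 0`, for `k > q/2` and
`α ∈ (q/(2k), 1)`. -/
theorem stmt9
    {Ω : Type*} [MeasurableSpace Ω] (P : Measure Ω) [IsProbabilityMeasure P]
    (ν : Measure Sdown) [IsProbabilityMeasure ν]
    (hν1 : ν {s : Sdown | s.1 0 ∈ Set.Ioo 0 1} = 1)
    (hνcons : ν {s : Sdown | (∑' i, s.1 i) = 1} = 1)
    (q : ℕ) (hq : 0 < q)
    (M : FragModel Ω P q ν)
    (π : Measure ℝ) [IsProbabilityMeasure π]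
    (hπpos : π (Set.Iic 0) = 0)
    (hπν : ∀ f : ℝ → ℝ, Measurable f → (∃ C : ℝ, ∀ x, |f x| ≤ C) →
      ∫ s, (∑' i, s.1 i * f (s.1 i)) ∂ν = ∫ x, f (Real.exp (-x)) ∂π)
    (a b : ℝ) (ha : 0 < a) (hab : a < b) (hsupp : msupport π = Set.Icc a b)
    (k : ℕ) (hk : (q : ℝ) / 2 < k)
    (α : ℝ) (hα : α ∈ Set.Ioo ((q : ℝ) / (2 * k)) 1) :
    Tendsto (fun ε : ℝ =>
        ε ^ (-(q : ℝ) / 2) *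
          (P {ω | (k : ℝ) ≤ M.Lsum ε (α * (-Real.log ε)) ω}).toReal)
      (nhdsWithin 0 (Set.Ioo 0 1)) (nhds 0) := by
  obtain ⟨hα1, hα2⟩ := hα
  have hqpos : (0:ℝ) < q := Nat.cast_pos.2 hq
  have hkpos : (0:ℝ) < k := lt_of_le_of_lt (by positivity) hk
  have hαpos : 0 < α := lt_of_le_of_lt (by positivity) hα1
  set N : ℕ := Fintype.card (Finset (Fin q) × (Fin q → Fin q)) with hN
  set e : ℝ := α * k + (-(q : ℝ) / 2) with he
  have hepos : 0 < e := by
    have h1 : (q : ℝ) < α * (2 * k) := (div_lt_iff₀ (by positivity)).1 hα1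
    rw [he]; nlinarith
  have hg0 : Tendsto (fun ε : ℝ => ((N : ℝ) * 2 ^ k) * ε ^ e)
      (nhdsWithin 0 (Set.Ioo 0 1)) (nhds 0) := by
    have h1 : Tendsto (fun ε : ℝ => ε ^ e) (nhds 0) (nhds (0:ℝ)) := by
      have h2 := (Real.continuousAt_rpow_const 0 e (Or.inr hepos.le)).tendsto
      rwa [Real.zero_rpow hepos.ne'] at h2
    have h3 := (h1.const_mul ((N : ℝ) * 2 ^ k)).mono_left
      (nhdsWithin_le_nhds (s := Set.Ioo (0:ℝ) 1))
    simpa using h3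
  apply squeeze_zero' ?_ ?_ hg0
  · filter_upwards [self_mem_nhdsWithin] with ε hε
    exact mul_nonneg (Real.rpow_nonneg hε.1.le _) ENNReal.toReal_nonneg
  · filter_upwards [self_mem_nhdsWithin] with ε hε
    obtain ⟨hε0, hε1⟩ := hε
    have hlog : Real.log ε < 0 := Real.log_neg hε0 hε1
    have ht : 0 < α * (-Real.log ε) := mul_pos hαpos (by linarith)
    have hexp : Real.exp (-(α * (-Real.log ε))) = ε ^ α := by
      rw [Real.rpow_def_of_pos hε0]
      congr 1
      ring
    have hbound := M.main_bound hq k ε (α * (-Real.log ε)) ht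
    have hfin : ((N : ENNReal) * ENNReal.ofReal (2 * Real.exp (-(α * (-Real.log ε)))) ^ k)
        ≠ ⊤ :=
      ENNReal.mul_ne_top (ENNReal.natCast_ne_top N)
        (ENNReal.pow_ne_top ENNReal.ofReal_ne_top)
    have htR := ENNReal.toReal_mono hfin hbound
    have hRHS : ((N : ENNReal) * ENNReal.ofReal (2 * Real.exp (-(α * (-Real.log ε)))) ^ k).toReal
        = (N : ℝ) * (2 * Real.exp (-(α * (-Real.log ε)))) ^ k := by
      rw [ENNReal.toReal_mul, ENNReal.toReal_pow, ENNReal.toReal_natCast,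
        ENNReal.toReal_ofReal (by positivity)]
    rw [hRHS] at htR
    refine le_trans (mul_le_mul_of_nonneg_left htR (Real.rpow_nonneg hε0.le _)) (le_of_eq ?_)
    rw [hexp, mul_pow]
    have hεk : (ε ^ α) ^ k = ε ^ (α * k) := by
      rw [← Real.rpow_natCast (ε ^ α) k, ← Real.rpow_mul hε0.le]
    rw [hεk, he, Real.rpow_add hε0]
    ring

end
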